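/- arXiv:0707.1946 — 4 statements merged into one kernel-verified Lean document; each statement's English description precedes it below -/
import Mathlib

section
/- Let u : ℝ² → ℝ be a 1-Lipschitz function (with respect to the Euclidean norm) whose graph G = {(x, u(x)) : x ∈ ℝ²} contains a lightlike straight line, i.e., there exist x₀ ∈ ℝ² and a unit vector w ∈ ℝ² with u(x₀ + s·w) = u(x₀) + s for all s ∈ ℝ. Then u(x) = u(x₀) + ⟨x − x₀, w⟩ for all x ∈ ℝ², i.e., G is the lightlike plane containing that line. -/
/-- A 1-Lipschitz (pseudo-spacelike) graph containing a lightlike straight line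
is the lightlike plane containing that line. -/
theorem stmt0 (u : EuclideanSpace ℝ (Fin 2) → ℝ) (hu : LipschitzWith 1 u)
    (x₀ w : EuclideanSpace ℝ (Fin 2)) (hw : ‖w‖ = 1)
    (hline : ∀ s : ℝ, u (x₀ + s • w) = u x₀ + s) :
    ∀ x : EuclideanSpace ℝ (Fin 2), u x = u x₀ + (inner ℝ (x - x₀) w : ℝ) := by
  intro x
  set v := x - x₀ with hv
  set t : ℝ := inner ℝ v w with ht
  -- Lipschitz bound against points on the line
  have key : ∀ s : ℝ, |u x - (u x₀ + s)| ≤ ‖v - s • w‖ := by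
    intro s
    have h := hu.dist_le_mul x (x₀ + s • w)
    rw [hline s] at h
    have h1 : dist (u x) (u x₀ + s) = |u x - (u x₀ + s)| := Real.dist_eq _ _
    have h2 : dist x (x₀ + s • w) = ‖v - s • w‖ := by
      rw [dist_eq_norm, hv]
      congr 1
      abel
    rw [h1, h2] at h
    simpa using h
  -- norm squared formula
  have nsq : ∀ s : ℝ, ‖v - s • w‖ ^ 2 = ‖v‖ ^ 2 - 2 * s * t + s ^ 2 := by
    intro s
    have := @norm_sub_sq_real (EuclideanSpace ℝ (Fin 2)) _ _ v (s • w)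
    rw [real_inner_smul_right, norm_smul] at this
    rw [this, hw, ht]
    simp [abs_mul_abs_self, mul_pow]
    ring_nf
  have main : ∀ ε : ℝ, 0 < ε → |u x - (u x₀ + t)| ≤ ε := by
    intro ε hε
    set c2 : ℝ := ‖v‖ ^ 2 - t ^ 2 with hc2
    set a : ℝ := max 1 (c2 / (2 * ε)) with ha
    have ha1 : (1 : ℝ) ≤ a := le_max_left _ _
    have hapos : 0 < a := lt_of_lt_of_le one_pos ha1
    have hac : c2 ≤ 2 * a * ε := by
      have : c2 / (2 * ε) ≤ a := le_max_right _ _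
      calc c2 = (c2 / (2 * ε)) * (2 * ε) := by field_simp
        _ ≤ a * (2 * ε) := by nlinarith
        _ = 2 * a * ε := by ring
    -- bound ‖v - s•w‖ ≤ a + ε for s = t ± a
    have bound : ∀ s : ℝ, ‖v - s • w‖ ^ 2 = a ^ 2 + c2 → ‖v - s • w‖ ≤ a + ε := by
      intro s hs
      have hb : (0:ℝ) ≤ a + ε := by linarith
      have hsq : ‖v - s • w‖ ^ 2 ≤ (a + ε) ^ 2 := by
        rw [hs]; nlinarith
      nlinarith [norm_nonneg (v - s • w)]
    -- lower bound with s = t + a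
    have hlo : u x₀ + t - ε ≤ u x := by
      have h1 := key (t + a)
      have h2 : ‖v - (t + a) • w‖ ^ 2 = a ^ 2 + c2 := by rw [nsq, hc2]; ring_nf
      have h3 := bound (t + a) h2
      have := abs_le.1 h1
      linarith [this.1, this.2]
    -- upper bound with s = t - a
    have hhi : u x ≤ u x₀ + t + ε := by
      have h1 := key (t - a)
      have h2 : ‖v - (t - a) • w‖ ^ 2 = a ^ 2 + c2 := by rw [nsq, hc2]; ring_nf
      have h3 := bound (t - a) h2
      have := abs_le.1 h1
      linarith [this.1, this.2]
    rw [abs_le]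
    constructor <;> linarith
  have : |u x - (u x₀ + t)| ≤ 0 := le_of_forall_pos_le_add (by simpa using main)
  have := abs_nonneg (u x - (u x₀ + t))
  have h0 : |u x - (u x₀ + t)| = 0 := le_antisymm ‹_› ‹_›
  have := abs_eq_zero.1 h0
  linarith
end

section
/- Let u : ℝ² → ℝ be a 1-Lipschitz function and suppose [p₁,p₂] and [q₁,q₂] are two segments in ℝ² such that the corresponding curves s ↦ (γ(s), u(γ(s))) over these segments are lightlike segments of the graph (i.e., u restricted to each segment is affine with slope exactly 1 in the direction of the segment). If the open segment ]p₁,p₂[ meets [q₁,q₂], then the two segments lie on a common straight line in ℝ². -/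
private lemma seg_split {E : Type*} [NormedAddCommGroup E] [NormedSpace ℝ E]
    (u : E → ℝ) (hu : LipschitzWith 1 u) {a b x : E} (hx : x ∈ segment ℝ a b)
    (h : u b - u a = ‖b - a‖) :
    u x - u a = ‖x - a‖ ∧ u b - u x = ‖b - x‖ := by
  have h1 : u x - u a ≤ ‖x - a‖ := by
    have := hu.dist_le_mul x a
    simp only [NNReal.coe_one, one_mul, Real.dist_eq, dist_eq_norm] at this
    exact (le_abs_self _).trans this
  have h2 : u b - u x ≤ ‖b - x‖ := by
    have := hu.dist_le_mul b x
    simp only [NNReal.coe_one, one_mul, Real.dist_eq, dist_eq_norm] at this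
    exact (le_abs_self _).trans this
  have hsum := dist_add_dist_of_mem_segment hx
  rw [dist_eq_norm', dist_eq_norm', dist_eq_norm'] at hsum
  constructor <;> linarith

private lemma lip_le {E : Type*} [NormedAddCommGroup E] [NormedSpace ℝ E]
    (u : E → ℝ) (hu : LipschitzWith 1 u) (a b : E) : u b - u a ≤ ‖b - a‖ := by
  have := hu.dist_le_mul b a
  simp only [NNReal.coe_one, one_mul, Real.dist_eq, dist_eq_norm] at this
  exact (le_abs_self _).trans this

private lemma key (u : EuclideanSpace ℝ (Fin 2) → ℝ) (hu : LipschitzWith 1 u)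
    (p₁ p₂ q₁ q₂ : EuclideanSpace ℝ (Fin 2))
    (hp : p₁ ≠ p₂)
    (hlp : u p₂ - u p₁ = ‖p₂ - p₁‖)
    (hlq : u q₂ - u q₁ = ‖q₂ - q₁‖)
    (hmeet : (openSegment ℝ p₁ p₂ ∩ segment ℝ q₁ q₂).Nonempty) :
    Collinear ℝ ({p₁, p₂, q₁, q₂} : Set (EuclideanSpace ℝ (Fin 2))) := by
  obtain ⟨x, hx1, hx2⟩ := hmeet
  obtain ⟨a, b, ha, hb, hab, hxe⟩ := hx1
  set v := p₂ - p₁ with hv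
  have hv0 : v ≠ 0 := sub_ne_zero.mpr (Ne.symm hp)
  have hxp1 : x - p₁ = b • v := by
    rw [← hxe, hv, show a = 1 - b by linarith]; module
  have hp2x : p₂ - x = a • v := by
    rw [← hxe, hv, show b = 1 - a by linarith]; module
  have hxp1ne : x - p₁ ≠ 0 := by
    rw [hxp1]; exact smul_ne_zero (ne_of_gt hb) hv0
  have hp2xne : p₂ - x ≠ 0 := by
    rw [hp2x]; exact smul_ne_zero (ne_of_gt ha) hv0
  have hxseg : x ∈ segment ℝ p₁ p₂ := openSegment_subset_segment ℝ p₁ p₂ ⟨a, b, ha, hb, hab, hxe⟩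
  obtain ⟨hP1, hP2⟩ := seg_split u hu hxseg hlp
  obtain ⟨hQ1, hQ2⟩ := seg_split u hu hx2 hlq
  -- SameRay (q₂ - x) (x - p₁)
  have hA : SameRay ℝ (q₂ - x) (x - p₁) := by
    rw [sameRay_iff_norm_add]
    have hle := lip_le u hu p₁ q₂
    have htri : ‖q₂ - x + (x - p₁)‖ ≤ ‖q₂ - x‖ + ‖x - p₁‖ := norm_add_le _ _
    have heq : q₂ - x + (x - p₁) = q₂ - p₁ := by module
    rw [heq] at htri ⊢
    linarith
  have hB : SameRay ℝ (p₂ - x) (x - q₁) := by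
    rw [sameRay_iff_norm_add]
    have hle := lip_le u hu q₁ p₂
    have htri : ‖p₂ - x + (x - q₁)‖ ≤ ‖p₂ - x‖ + ‖x - q₁‖ := norm_add_le _ _
    have heq : p₂ - x + (x - q₁) = p₂ - q₁ := by module
    rw [heq] at htri ⊢
    linarith
  obtain ⟨r, hr0, hr⟩ := hA.exists_nonneg_right hxp1ne
  obtain ⟨s, hs0, hs⟩ := hB.exists_nonneg_left hp2xne
  -- hr : q₂ - x = r • (x - p₁), hs : s • (p₂ - x) = x - q₁
  have hcol : ∀ p ∈ ({p₁, p₂, q₁, q₂} : Set (EuclideanSpace ℝ (Fin 2))),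
      ∃ c : ℝ, p = c • v + p₁ := by
    intro p hp'
    simp only [Set.mem_insert_iff, Set.mem_singleton_iff] at hp'
    rcases hp' with h | h | h | h <;> rw [h]
    · exact ⟨0, by simp⟩
    · exact ⟨1, by rw [hv]; module⟩
    · refine ⟨b - s * a, ?_⟩
      have hq1 : q₁ = (x - p₁) - (x - q₁) + p₁ := by module
      rw [hq1, ← hs, hxp1, hp2x]; module
    · refine ⟨r * b + b, ?_⟩
      have hq2 : q₂ = (q₂ - x) + (x - p₁) + p₁ := by module
      rw [hq2, hr, hxp1]; module
  rw [collinear_iff_of_mem (Set.mem_insert p₁ _)]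
  exact ⟨v, fun p hp => (hcol p hp).imp fun c hc => hc⟩

/-- Two lightlike (singular) segments of a pseudo-spacelike graph that meet in the
interior of one of them lie on a common straight line. -/
theorem stmt1 (u : EuclideanSpace ℝ (Fin 2) → ℝ) (hu : LipschitzWith 1 u)
    (p₁ p₂ q₁ q₂ : EuclideanSpace ℝ (Fin 2))
    (hp : p₁ ≠ p₂) (hq : q₁ ≠ q₂)
    (hlp : |u p₂ - u p₁| = ‖p₂ - p₁‖)
    (hlq : |u q₂ - u q₁| = ‖q₂ - q₁‖)
    (hmeet : (openSegment ℝ p₁ p₂ ∩ segment ℝ q₁ q₂).Nonempty) :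
    Collinear ℝ ({p₁, p₂, q₁, q₂} : Set (EuclideanSpace ℝ (Fin 2))) := by
  have hsetp : ({p₂, p₁, q₁, q₂} : Set (EuclideanSpace ℝ (Fin 2))) = {p₁, p₂, q₁, q₂} :=
    Set.insert_comm _ _ _
  have hsetq : ({p₁, p₂, q₂, q₁} : Set (EuclideanSpace ℝ (Fin 2))) = {p₁, p₂, q₁, q₂} := by
    simp [Set.pair_comm q₂ q₁]
  rcases (abs_eq (norm_nonneg _)).1 hlp with hp' | hp' <;>
  rcases (abs_eq (norm_nonneg _)).1 hlq with hq' | hq'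
  · exact key u hu p₁ p₂ q₁ q₂ hp hp' hq' hmeet
  · rw [← hsetq]
    refine key u hu p₁ p₂ q₂ q₁ hp hp' ?_ ?_
    · rw [norm_sub_rev] at hq'; linarith
    · rwa [segment_symm]
  · rw [← hsetp]
    refine key u hu p₂ p₁ q₁ q₂ hp.symm ?_ hq' ?_
    · rw [norm_sub_rev] at hp'; linarith
    · rwa [openSegment_symm]
  · have hset2 : ({p₂, p₁, q₂, q₁} : Set (EuclideanSpace ℝ (Fin 2))) = {p₁, p₂, q₁, q₂} := by
      rw [Set.insert_comm, hsetq]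
    rw [← hset2]
    refine key u hu p₂ p₁ q₂ q₁ hp.symm ?_ ?_ ?_
    · rw [norm_sub_rev] at hp'; linarith
    · rw [norm_sub_rev] at hq'; linarith
    · rwa [openSegment_symm, segment_symm]
end

section
/- Let θ : ℝ → ℝ be a continuous strictly increasing function and define γ : ℝ → ℝ² ≅ ℂ by γ(s) = γ(0) + ∫₀ˢ e^{iθ(x)} dx. Then for all s ≠ s₀, ‖γ(s) − γ(s₀)‖₀ < |s − s₀|. Consequently the lightlike curve Γ(s) = (γ(s), s) in Lorentz-Minkowski space satisfies: Γ(s) − Γ(s₀) is timelike for all s ≠ s₀, i.e., Γ − {Γ(s₀)} lies in the interior of the light cone with vertex Γ(s₀). -/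
open MeasureTheory intervalIntegral Complex Set
open scoped ENNReal

lemma countable_exp_fiber (u : ℂ) : {t : ℝ | Complex.exp (t * Complex.I) = u}.Countable := by
  rcases eq_empty_or_nonempty {t : ℝ | Complex.exp (t * Complex.I) = u} with h | ⟨t₀, ht₀⟩
  · simp [h]
  · apply Set.Countable.mono _ (Set.countable_range (fun n : ℤ => t₀ + n * (2 * Real.pi)))
    intro t ht
    simp only [Set.mem_setOf_eq] at ht ht₀
    have h1 : Complex.exp ((t - t₀ : ℝ) * Complex.I) = 1 := by
      push_cast
      rw [sub_mul, Complex.exp_sub, ht, ht₀, div_self (ht₀ ▸ Complex.exp_ne_zero _)]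
    rw [Complex.exp_eq_one_iff] at h1
    obtain ⟨n, hn⟩ := h1
    refine ⟨n, ?_⟩
    have hn' : ((t - t₀ : ℝ) : ℂ) * Complex.I = ((n : ℝ) * (2 * Real.pi) : ℝ) * Complex.I := by
      rw [hn]; push_cast; ring
    have h2 := mul_right_cancel₀ Complex.I_ne_zero hn'
    have h3 : t - t₀ = (n : ℝ) * (2 * Real.pi) := by exact_mod_cast h2
    show t₀ + (n : ℝ) * (2 * Real.pi) = t
    linarith

lemma key_s4 (θ : ℝ → ℝ) (hθc : Continuous θ) (hθm : StrictMono θ) {a b : ℝ} (hab : a < b) :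
    ‖∫ x in a..b, Complex.exp (θ x * Complex.I)‖ < b - a := by
  set I : ℂ := ∫ x in a..b, Complex.exp (θ x * Complex.I) with hIdef
  have hcont : Continuous fun x : ℝ => Complex.exp (θ x * Complex.I) :=
    Complex.continuous_exp.comp ((Complex.continuous_ofReal.comp hθc).mul continuous_const)
  rcases eq_or_ne I 0 with h0 | h0
  · rw [h0]; simpa using hab
  have habs : 0 < ‖I‖ := by simpa using h0
  set g : ℝ → ℝ := fun x => ‖I‖ - ((starRingEnd ℂ) I * Complex.exp (θ x * Complex.I)).re
    with hgdef
  have hrec : Continuous fun x : ℝ => ((starRingEnd ℂ) I * Complex.exp (θ x * Complex.I)).re :=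
    Complex.continuous_re.comp (continuous_const.mul hcont)
  have hgc : Continuous g := continuous_const.sub hrec
  have habsz : ∀ x : ℝ, ‖(starRingEnd ℂ) I * Complex.exp (θ x * Complex.I)‖
      = ‖I‖ := by
    intro x
    rw [norm_mul, Complex.norm_conj, Complex.norm_exp_ofReal_mul_I, mul_one]
  have hg0 : ∀ x, 0 ≤ g x := by
    intro x
    have := Complex.re_le_norm ((starRingEnd ℂ) I * Complex.exp (θ x * Complex.I))
    rw [habsz x] at this
    simpa [hgdef] using this
  have hc : (starRingEnd ℂ) I * I = ((‖I‖ : ℝ) : ℂ) ^ 2 := by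
    rw [mul_comm, Complex.mul_conj, Complex.normSq_eq_norm_sq]
    push_cast; ring
  have hint : ∫ x in a..b, g x = ‖I‖ * (b - a) - (‖I‖) ^ 2 := by
    have h1 : (∫ x in a..b, ((starRingEnd ℂ) I * Complex.exp (θ x * Complex.I)).re)
        = ((starRingEnd ℂ) I * I).re := by
      have hii : IntervalIntegrable
          (fun x : ℝ => (starRingEnd ℂ) I * Complex.exp (θ x * Complex.I)) volume a b :=
        (continuous_const.mul hcont).intervalIntegrable a b
      have h2 := Complex.reCLM.intervalIntegral_comp_comm hii
      simp only [Complex.reCLM_apply] at h2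
      rw [h2, intervalIntegral.integral_const_mul]
    have h3 : (∫ x in a..b, g x)
        = (∫ x in a..b, (‖I‖ : ℝ))
          - ∫ x in a..b, ((starRingEnd ℂ) I * Complex.exp (θ x * Complex.I)).re :=
      intervalIntegral.integral_sub intervalIntegrable_const (hrec.intervalIntegrable a b)
    rw [h3, intervalIntegral.integral_const, h1, hc]
    have : (((‖I‖ : ℝ) : ℂ) ^ 2).re = (‖I‖) ^ 2 := by
      simp [pow_two]
    rw [this]
    simp [smul_eq_mul, mul_comm]
  set S : Set ℝ := {t : ℝ | Complex.exp (t * Complex.I) = I / ‖I‖} with hSdef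
  have hnull : volume (θ ⁻¹' S) = 0 :=
    ((countable_exp_fiber _).preimage hθm.injective).measure_zero volume
  have hpos : 0 < ∫ x in a..b, g x := by
    rw [intervalIntegral.integral_pos_iff_support_of_nonneg_ae'
      (Filter.Eventually.of_forall hg0) (hgc.intervalIntegrable a b)]
    refine ⟨hab, ?_⟩
    have hsub : Ioc a b \ θ ⁻¹' S ⊆ Function.support g ∩ Ioc a b := by
      rintro x ⟨hx1, hx2⟩
      refine ⟨?_, hx1⟩
      intro hgx
      apply hx2
      have hre0 : ((starRingEnd ℂ) I * Complex.exp (θ x * Complex.I)).re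
          = ‖(starRingEnd ℂ) I * Complex.exp (θ x * Complex.I)‖ := by
        rw [habsz x]
        have hx0 : g x = 0 := hgx
        rw [hgdef] at hx0
        simp only [sub_eq_zero] at hx0
        linarith [hx0]
      rw [Complex.re_eq_norm] at hre0
      have heq : (starRingEnd ℂ) I * Complex.exp (θ x * Complex.I)
          = ((‖I‖ : ℝ) : ℂ) := by
        have := Complex.eq_coe_norm_of_nonneg hre0
        rwa [habsz x] at this
      have hIne : (starRingEnd ℂ) I ≠ 0 := by simpa using h0
      have habsne : ((‖I‖ : ℝ) : ℂ) ≠ 0 := by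
        exact_mod_cast habs.ne'
      simp only [hSdef, Set.mem_preimage, Set.mem_setOf_eq]
      rw [eq_div_iff habsne]
      apply mul_left_cancel₀ hIne
      linear_combination ((‖I‖ : ℝ) : ℂ) * heq - hc
    calc (0:ℝ≥0∞) < volume (Ioc a b \ θ ⁻¹' S) := by
          rw [measure_diff_null hnull]
          simpa using hab
      _ ≤ volume (Function.support g ∩ Ioc a b) := measure_mono hsub
  rw [hint] at hpos
  have h4 : ‖I‖ * ‖I‖ < ‖I‖ * (b - a) := by nlinarith
  exact lt_of_mul_lt_mul_left h4 habs.le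

/-- For a lightlike curve `Γ(s) = (γ(s), s)` with strictly turning tangent angle,
any chord is timelike: `‖γ s - γ s₀‖ < |s - s₀|`. -/
theorem stmt4 (θ : ℝ → ℝ) (hθc : Continuous θ) (hθm : StrictMono θ)
    (γ : ℝ → ℂ)
    (hγ : ∀ s : ℝ, γ s = γ 0 + ∫ x in (0:ℝ)..s, Complex.exp (θ x * Complex.I)) :
    ∀ s s₀ : ℝ, s ≠ s₀ →
      ‖γ s - γ s₀‖ < |s - s₀| ∧
      ‖γ s - γ s₀‖ ^ 2 - (s - s₀) ^ 2 < 0 := by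
  have hcont : Continuous fun x : ℝ => Complex.exp (θ x * Complex.I) :=
    Complex.continuous_exp.comp ((Complex.continuous_ofReal.comp hθc).mul continuous_const)
  have hdiff : ∀ s s₀ : ℝ, γ s - γ s₀ = ∫ x in s₀..s, Complex.exp (θ x * Complex.I) := by
    intro s s₀
    rw [hγ s, hγ s₀]
    rw [add_sub_add_left_eq_sub]
    exact intervalIntegral.integral_interval_sub_left
      (hcont.intervalIntegrable 0 s) (hcont.intervalIntegrable 0 s₀)
  intro s s₀ hne
  have main : ‖γ s - γ s₀‖ < |s - s₀| := by
    rcases hne.lt_or_gt with h | h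
    · have h1 := key_s4 θ hθc hθm h
      rw [← hdiff s₀ s] at h1
      have h2 : ‖γ s - γ s₀‖ = ‖γ s₀ - γ s‖ := by
        rw [← neg_sub, norm_neg]
      rw [h2, abs_of_neg (by linarith : s - s₀ < 0)]
      linarith
    · have h1 := key_s4 θ hθc hθm h
      rw [← hdiff s s₀] at h1
      rw [abs_of_pos (by linarith : 0 < s - s₀)]
      linarith
  refine ⟨main, ?_⟩
  have h1 : ‖γ s - γ s₀‖ ^ 2 < |s - s₀| ^ 2 :=
    pow_lt_pow_left₀ main (norm_nonneg _) two_ne_zero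
  rw [_root_.sq_abs] at h1
  linarith
end

section
/- Let θ : ℝ → ℝ be continuous and strictly increasing, let γ(s) = γ(0) + ∫₀ˢ e^{iθ(x)} dx (identifying ℝ² ≅ ℂ), and let Γ(s) = (γ(s), s) be the associated lightlike curve in ℝ³₁. Let Σ = {(x,t) : t = ⟨x,σ⟩₀ + c} be any spacelike plane, i.e., ‖σ‖₀ < 1. Then Γ meets Σ in exactly one point, and the intersection is transversal: the function f(s) = s − ⟨γ(s),σ⟩₀ − c satisfies f'(s) ≥ 1 − ‖σ‖₀ > 0 and f is a bijection from ℝ onto ℝ. -/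
/-- A lightlike boundary curve `Γ(s) = (γ(s), s)` meets every spacelike plane
`{t = ⟨x,σ⟩₀ + c}` (with `‖σ‖₀ < 1`) transversally in exactly one point. -/
theorem stmt16 (θ : ℝ → ℝ) (hθc : Continuous θ) (hθm : StrictMono θ)
    (γ : ℝ → ℂ)
    (hγ : ∀ s : ℝ, γ s = γ 0 + ∫ x in (0:ℝ)..s, Complex.exp (θ x * Complex.I))
    (σ : ℂ) (hσ : ‖σ‖ < 1) (c : ℝ) :
    (∀ s : ℝ,
      HasDerivAt (fun s' => s' - (γ s' * (starRingEnd ℂ) σ).re - c)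
        (1 - (Complex.exp (θ s * Complex.I) * (starRingEnd ℂ) σ).re) s ∧
      1 - ‖σ‖ ≤ 1 - (Complex.exp (θ s * Complex.I) * (starRingEnd ℂ) σ).re) ∧
    Function.Bijective (fun s : ℝ => s - (γ s * (starRingEnd ℂ) σ).re - c) ∧
    (∃! s : ℝ, s = (γ s * (starRingEnd ℂ) σ).re + c) := by
  set e : ℝ → ℂ := fun x => Complex.exp (θ x * Complex.I) with he
  have hec : Continuous e :=
    Complex.continuous_exp.comp ((Complex.continuous_ofReal.comp hθc).mul continuous_const)
  have hγd : ∀ s : ℝ, HasDerivAt γ (e s) s := by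
    intro s
    have h1 : HasDerivAt (fun u => ∫ x in (0:ℝ)..u, e x) (e s) s :=
      (hec.integral_hasStrictDerivAt 0 s).hasDerivAt
    have h2 : HasDerivAt (fun u => γ 0 + ∫ x in (0:ℝ)..u, e x) (e s) s := h1.const_add _
    exact h2.congr_of_eventuallyEq (Filter.Eventually.of_forall fun u => (hγ u))
  set f : ℝ → ℝ := fun s' => s' - (γ s' * (starRingEnd ℂ) σ).re - c with hf
  have habs : ∀ s : ℝ, ‖e s‖ = 1 := fun s => Complex.norm_exp_ofReal_mul_I _
  have hkey : ∀ s : ℝ,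
      HasDerivAt f (1 - (e s * (starRingEnd ℂ) σ).re) s ∧
      1 - ‖σ‖ ≤ 1 - (e s * (starRingEnd ℂ) σ).re := by
    intro s
    constructor
    · have h2 : HasDerivAt (fun s' => γ s' * (starRingEnd ℂ) σ) (e s * (starRingEnd ℂ) σ) s :=
        (hγd s).mul_const _
      have h3 : HasDerivAt (fun s' => (γ s' * (starRingEnd ℂ) σ).re)
          ((e s * (starRingEnd ℂ) σ).re) s :=
        (Complex.reCLM.hasFDerivAt.comp_hasDerivAt s h2)
      exact ((hasDerivAt_id s).sub h3).sub_const c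
    · have hre : (e s * (starRingEnd ℂ) σ).re ≤ ‖σ‖ := by
        calc (e s * (starRingEnd ℂ) σ).re ≤ ‖e s * (starRingEnd ℂ) σ‖ :=
              Complex.re_le_norm _
          _ = ‖σ‖ := by rw [norm_mul, habs s, one_mul, Complex.norm_conj]
      linarith
  have hpos : (0:ℝ) < 1 - ‖σ‖ := by linarith
  have hderiv : ∀ s, deriv f s = 1 - (e s * (starRingEnd ℂ) σ).re := fun s => (hkey s).1.deriv
  have hmono : StrictMono f := by
    apply strictMono_of_deriv_pos
    intro s
    rw [hderiv s]
    linarith [(hkey s).2]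
  have hfc : Continuous f :=
    continuous_iff_continuousAt.mpr fun s => (hkey s).1.differentiableAt.continuousAt
  -- growth bounds
  set k : ℝ := 1 - ‖σ‖ with hk
  have hgd : ∀ s : ℝ, HasDerivAt (fun x : ℝ => f x - k * x)
      (1 - (e s * (starRingEnd ℂ) σ).re - k * 1) s :=
    fun s => (hkey s).1.sub ((hasDerivAt_id s).const_mul k)
  have hg : Monotone (fun s => f s - k * s) := by
    apply monotone_of_deriv_nonneg
    · exact fun s => (hgd s).differentiableAt
    · intro s
      rw [(hgd s).deriv]
      have := (hkey s).2
      simp only [mul_one]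
      linarith
  have hub : ∀ s : ℝ, 0 ≤ s → f 0 + k * s ≤ f s := by
    intro s hs
    have := hg hs
    simp only [mul_zero, sub_zero] at this
    linarith
  have hlb : ∀ s : ℝ, s ≤ 0 → f s ≤ f 0 + k * s := by
    intro s hs
    have := hg hs
    simp only [mul_zero, sub_zero] at this
    linarith
  have htop : Filter.Tendsto f Filter.atTop Filter.atTop := by
    apply Filter.tendsto_atTop_mono' Filter.atTop
      ((Filter.eventually_ge_atTop (0:ℝ)).mono fun s hs => hub s hs)
    exact Filter.tendsto_atTop_add_const_left _ _
      (Filter.Tendsto.const_mul_atTop hpos Filter.tendsto_id)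
  have hbot : Filter.Tendsto f Filter.atBot Filter.atBot := by
    apply Filter.tendsto_atBot_mono' Filter.atBot
      ((Filter.eventually_le_atBot (0:ℝ)).mono fun s hs => hlb s hs)
    exact Filter.tendsto_atBot_add_const_left _ _
      (Filter.Tendsto.const_mul_atBot hpos Filter.tendsto_id)
  have hbij : Function.Bijective f := ⟨hmono.injective, hfc.surjective htop hbot⟩
  refine ⟨hkey, hbij, ?_⟩
  obtain ⟨s₀, hs₀⟩ := hbij.2 0
  refine ⟨s₀, ?_, ?_⟩
  · have : f s₀ = 0 := hs₀
    simp only [hf] at this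
    linarith
  · intro y hy
    apply hbij.1
    show f y = f s₀
    rw [hs₀]
    simp only [hf]
    linarith
end
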